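/- Let v be a primitive root of unity of order 2t in C and let Λ-bar be the space of rational functions F(x_1,...,x_n, y_1,...,y_m) = f/∏_{i,j}(x_i - y_j), f a Laurent polynomial skew-symmetric in the x's and in the y's, equipped with the shuffle product using kernels (x + v^{-1} y)/(x - y). Say F satisfies the wheel condition if F vanishes whenever x_1/y_1 = y_1/x_2 = x_2/y_2 = ... = x_t/y_t = y_t/x_1 = -v^{-1}. Then the subspace Λ^w of elements satisfying the wheel condition is closed under the shuffle product. -/

import Mathlib

open MvPolynomial Equiv

/-- Numerators of elements of `Λ̄_{n,m}`: polynomials in `x_1,…,x_n, y_1,…,y_m` over ℂ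
(the corresponding rational function is `F = f / ∏_{i,j}(x_i - y_j)`). -/
abbrev LNum (n m : ℕ) : Type := MvPolynomial (Fin n ⊕ Fin m) ℂ

/-- Skew-symmetry in the `x`-variables and in the `y`-variables separately. -/
def SkewSym {n m : ℕ} (f : LNum n m) : Prop :=
  (∀ σ : Perm (Fin n), rename (Sum.map σ id) f = (Perm.sign σ : ℤ) • f) ∧
  (∀ τ : Perm (Fin m), rename (Sum.map id τ) f = (Perm.sign τ : ℤ) • f)

/-- The denominator `∏_{i,j}(x_i - y_j)` evaluated at a point `z`. -/
def Dval {n m : ℕ} (z : Fin n ⊕ Fin m → ℂ) : ℂ :=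
  ∏ i : Fin n, ∏ j : Fin m, (z (Sum.inl i) - z (Sum.inr j))

/-- A point of the "wheel": `x_1/y_1 = y_1/x_2 = ⋯ = x_t/y_t = y_t/x_1 = -v⁻¹`,
i.e. `y_i = -v x_i` and (cyclically) `x_{i+1} = -v y_i`, with nonvanishing wheel
variables (this requires `t ≤ n` and `t ≤ m`). -/
def WheelPt (v : ℂ) (t : ℕ) {n m : ℕ} (z : Fin n ⊕ Fin m → ℂ) : Prop :=
  ∃ (hn : t ≤ n) (hm : t ≤ m),
    (∀ i : Fin t, z (Sum.inl (Fin.castLE hn i)) ≠ 0) ∧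
    (∀ i : Fin t, z (Sum.inr (Fin.castLE hm i)) =
      -v * z (Sum.inl (Fin.castLE hn i))) ∧
    (∀ i : Fin t, z (Sum.inl (Fin.castLE hn ⟨((i : ℕ) + 1) % t, Nat.mod_lt _ i.pos⟩)) =
      -v * z (Sum.inr (Fin.castLE hm i)))

/-- The wheel condition: the rational function `f / ∏(x_i - y_j)` vanishes at every
wheel point where it is defined. -/
def WheelCond (v : ℂ) (t : ℕ) {n m : ℕ} (f : LNum n m) : Prop :=
  ∀ z : Fin n ⊕ Fin m → ℂ, WheelPt v t z → Dval z ≠ 0 → eval z f = 0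

/-- The numerator of the shuffle product `F ⋆ G` of `F = f/∏(x-y) ∈ Λ̄_{k₁,l₁}` and
`G = g/∏(x-y) ∈ Λ̄_{k₂,l₂}`: the doubly skew-symmetrization of
`f·g·∏(x_i + v⁻¹ y_j)·∏(y_j + v⁻¹ x_i)` over cross pairs. -/
noncomputable def shufNum (v : ℂ) {k₁ l₁ k₂ l₂ : ℕ}
    (f : LNum k₁ l₁) (g : LNum k₂ l₂) : LNum (k₁ + k₂) (l₁ + l₂) :=
  (((k₁ + k₂).factorial * (l₁ + l₂).factorial : ℂ))⁻¹ •
    ∑ σ : Perm (Fin (k₁ + k₂)), ∑ τ : Perm (Fin (l₁ + l₂)),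
      ((Perm.sign σ : ℤ) * (Perm.sign τ : ℤ)) •
        rename (Sum.map σ τ)
          (rename (Sum.map (Fin.castAdd k₂) (Fin.castAdd l₂)) f *
           rename (Sum.map (Fin.natAdd k₁) (Fin.natAdd l₁)) g *
           (∏ i : Fin k₁, ∏ j : Fin l₂,
              (X (Sum.inl (Fin.castAdd k₂ i)) +
                C v⁻¹ * X (Sum.inr (Fin.natAdd l₁ j)))) *
           ∏ j : Fin l₁, ∏ i : Fin k₂,
              (X (Sum.inr (Fin.castAdd l₂ j)) +
                C v⁻¹ * X (Sum.inl (Fin.natAdd k₁ i))))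

lemma exists_perm_comp {α β : Type*} [Fintype α] [Fintype β] [DecidableEq β]
    (e₁ e₂ : α → β) (h₁ : Function.Injective e₁) (h₂ : Function.Injective e₂) :
    ∃ ρ : Perm β, ∀ a, ρ (e₁ a) = e₂ a := by
  classical
  let E₁ : α ≃ Set.range e₁ := Equiv.ofInjective e₁ h₁
  let E₂ : α ≃ Set.range e₂ := Equiv.ofInjective e₂ h₂
  let e : {x // x ∈ Set.range e₁} ≃ {x // x ∈ Set.range e₂} := E₁.symm.trans E₂
  refine ⟨e.extendSubtype, fun a => ?_⟩
  rw [Equiv.extendSubtype_apply_of_mem e (e₁ a) ⟨a, rfl⟩]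
  have : (⟨e₁ a, ⟨a, rfl⟩⟩ : {x // x ∈ Set.range e₁}) = E₁ a := rfl
  rw [this]
  simp [e, E₂, Equiv.ofInjective_apply]

lemma wheel_eval_zero (v : ℂ) (t : ℕ) {n m : ℕ} (f : LNum n m)
    (hf : SkewSym f) (hfw : WheelCond v t f) (w : Fin n ⊕ Fin m → ℂ)
    (c : Fin t → Fin n) (d : Fin t → Fin m)
    (hc : Function.Injective c) (hd : Function.Injective d)
    (h0 : ∀ i, w (Sum.inl (c i)) ≠ 0)
    (h1 : ∀ i, w (Sum.inr (d i)) = -v * w (Sum.inl (c i)))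
    (h2 : ∀ i : Fin t, w (Sum.inl (c ⟨((i:ℕ)+1)%t, Nat.mod_lt _ i.pos⟩)) = -v * w (Sum.inr (d i)))
    (hD : ∀ i j, w (Sum.inl i) - w (Sum.inr j) ≠ 0) :
    eval w f = 0 := by
  classical
  have htn : t ≤ n := by
    simpa using Fintype.card_le_of_injective c hc
  have htm : t ≤ m := by
    simpa using Fintype.card_le_of_injective d hd
  obtain ⟨ρ, hρ⟩ := exists_perm_comp (Fin.castLE htn) c (Fin.castLE_injective htn) hc
  obtain ⟨π, hπ⟩ := exists_perm_comp (Fin.castLE htm) d (Fin.castLE_injective htm) hd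
  set w' : Fin n ⊕ Fin m → ℂ := w ∘ Sum.map ρ π with hw'
  have hρ' : ∀ (j : ℕ) (hj : j < t), ρ ⟨j, lt_of_lt_of_le hj htn⟩ = c ⟨j, hj⟩ :=
    fun j hj => hρ ⟨j, hj⟩
  have hπ' : ∀ (j : ℕ) (hj : j < t), π ⟨j, lt_of_lt_of_le hj htm⟩ = d ⟨j, hj⟩ :=
    fun j hj => hπ ⟨j, hj⟩
  have hwp : WheelPt v t w' := by
    refine ⟨htn, htm, ?_, ?_, ?_⟩
    · intro i
      simpa [w', Fin.castLE, hρ' i.1 i.2] using h0 i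
    · intro i
      simpa [w', Fin.castLE, hρ' i.1 i.2, hπ' i.1 i.2] using h1 i
    · intro i
      simpa [w', Fin.castLE, hρ' _ (Nat.mod_lt _ i.pos), hπ' i.1 i.2] using h2 i
  have hDp : Dval w' ≠ 0 := by
    unfold Dval
    rw [Finset.prod_ne_zero_iff]
    intro i _
    rw [Finset.prod_ne_zero_iff]
    intro j _
    exact hD (ρ i) (π j)
  have hz : eval w' f = 0 := hfw w' hwp hDp
  have hren : (rename (Sum.map ⇑ρ ⇑π) f : LNum n m)
      = ((Perm.sign π : ℤ) * (Perm.sign ρ : ℤ)) • f := by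
    have : (Sum.map ⇑ρ ⇑π : Fin n ⊕ Fin m → Fin n ⊕ Fin m)
        = (Sum.map ⇑ρ id) ∘ (Sum.map id ⇑π) := by
      funext s; cases s <;> simp
    rw [this, ← rename_rename, hf.2 π, map_zsmul, hf.1 ρ, smul_smul]
  have heq : eval w' f = ((Perm.sign π : ℤ) * (Perm.sign ρ : ℤ) : ℤ) • eval w f := by
    rw [hw']
    rw [← eval_rename, hren, map_zsmul]
  rw [hz] at heq
  have hne : (((Perm.sign π : ℤ) * (Perm.sign ρ : ℤ) : ℤ) : ℂ) ≠ 0 := by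
    simp
  have h := heq.symm
  rw [zsmul_eq_mul] at h
  exact (mul_eq_zero.mp h).resolve_left hne

theorem Equiv.Perm.apply_inv_self {α : Type*} (f : Perm α) (x : α) : f (f⁻¹ x) = x :=
  f.apply_symm_apply x

lemma fin_castAdd_mk {k₁ k₂ : ℕ} (x : Fin (k₁ + k₂)) (h : (x : ℕ) < k₁) :
    Fin.castAdd k₂ ⟨(x : ℕ), h⟩ = x := by
  ext; simp

lemma fin_mk_add_sub {k₁ k₂ : ℕ} (x : Fin (k₁ + k₂)) (h : k₁ ≤ (x : ℕ))
    (hh : k₁ + ((x : ℕ) - k₁) < k₁ + k₂) :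
    (⟨k₁ + ((x : ℕ) - k₁), hh⟩ : Fin (k₁ + k₂)) = x := by
  ext; simp; omega

lemma fin_natAdd_mk {k₁ k₂ : ℕ} (x : Fin (k₁ + k₂)) (h : k₁ ≤ (x : ℕ)) :
    Fin.natAdd k₁ ⟨(x : ℕ) - k₁, by have := x.isLt; omega⟩ = x := by
  ext; simp; omega

/-- for `v` a primitive `2t`-th root of unity, the subspace `Λ^w` of
elements of `Λ̄` satisfying the wheel condition is closed under the shuffle product. -/
theorem stmt14 (t : ℕ) (ht : 1 ≤ t) (v : ℂ) (hv : IsPrimitiveRoot v (2 * t))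
    (k₁ l₁ k₂ l₂ : ℕ) (f : LNum k₁ l₁) (g : LNum k₂ l₂)
    (hf : SkewSym f) (hg : SkewSym g)
    (hfw : WheelCond v t f) (hgw : WheelCond v t g) :
    WheelCond v t (shufNum v f g) := by
  classical
  intro z hz hD
  obtain ⟨hn, hm, hz0, hzy, hzx⟩ := hz
  have hv0 : v ≠ 0 := hv.ne_zero (by omega)
  have hDp : ∀ a b, z (Sum.inl a) - z (Sum.inr b) ≠ 0 := by
    intro a b
    unfold Dval at hD
    rw [Finset.prod_ne_zero_iff] at hD
    have h := hD a (Finset.mem_univ a)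
    rw [Finset.prod_ne_zero_iff] at h
    exact h b (Finset.mem_univ b)
  unfold shufNum
  simp only [smul_eval, map_sum, map_zsmul, eval_rename, map_mul, map_prod, map_add,
    eval_X, eval_C, Function.comp_apply, Sum.map_inl, Sum.map_inr]
  rw [mul_eq_zero]; right
  apply Finset.sum_eq_zero; intro σ _
  apply Finset.sum_eq_zero; intro τ _
  rw [smul_eq_zero]; right
  -- predicates: wheel x_i (resp. y_i) sits in the f-block
  set px : Fin t → Prop := fun i => ((σ⁻¹ (Fin.castLE hn i) : Fin (k₁+k₂)) : ℕ) < k₁ with hpxdef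
  set py : Fin t → Prop := fun i => ((τ⁻¹ (Fin.castLE hm i) : Fin (l₁+l₂)) : ℕ) < l₁ with hpydef
  by_cases hc1 : ∃ i : Fin t, px i ∧ ¬ py i
  · -- a factor of the first kernel product vanishes
    obtain ⟨i, hpi, hqi⟩ := hc1
    apply mul_eq_zero_of_left
    apply mul_eq_zero_of_right
    apply Finset.prod_eq_zero
      (Finset.mem_univ (⟨((σ⁻¹ (Fin.castLE hn i) : Fin (k₁+k₂)) : ℕ), hpi⟩ : Fin k₁))
    apply Finset.prod_eq_zero (Finset.mem_univ
      (⟨((τ⁻¹ (Fin.castLE hm i) : Fin (l₁+l₂)) : ℕ) - l₁, by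
        have := (τ⁻¹ (Fin.castLE hm i) : Fin (l₁+l₂)).isLt; omega⟩ : Fin l₂))
    rw [fin_castAdd_mk _ hpi, Perm.apply_inv_self,
      fin_natAdd_mk _ (le_of_not_gt hqi), Perm.apply_inv_self, hzy i]
    field_simp
    ring
  by_cases hc2 : ∃ i : Fin t, py i ∧ ¬ px ⟨((i:ℕ)+1)%t, Nat.mod_lt _ i.pos⟩
  · -- a factor of the second kernel product vanishes
    obtain ⟨i, hpi, hqi⟩ := hc2
    apply mul_eq_zero_of_right
    apply Finset.prod_eq_zero
      (Finset.mem_univ (⟨((τ⁻¹ (Fin.castLE hm i) : Fin (l₁+l₂)) : ℕ), hpi⟩ : Fin l₁))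
    apply Finset.prod_eq_zero (Finset.mem_univ
      (⟨((σ⁻¹ (Fin.castLE hn ⟨((i:ℕ)+1)%t, Nat.mod_lt _ i.pos⟩) : Fin (k₁+k₂)) : ℕ) - k₁, by
        have := (σ⁻¹ (Fin.castLE hn ⟨((i:ℕ)+1)%t, Nat.mod_lt _ i.pos⟩) : Fin (k₁+k₂)).isLt
        omega⟩ : Fin k₂))
    rw [fin_castAdd_mk _ hpi, Perm.apply_inv_self,
      fin_natAdd_mk _ (le_of_not_gt hqi), Perm.apply_inv_self, hzx i]
    field_simp
    ring
  -- otherwise the f-membership is closed going forward around the wheel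
  push_neg at hc1 hc2
  have ht0 : 0 < t := ht
  set ix : ℕ → Fin t := fun a => ⟨a % t, Nat.mod_lt _ ht0⟩ with hixdef
  have hstep : ∀ a : ℕ, px (ix a) → px (ix (a + 1)) := by
    intro a hPa
    have h2 := hc2 (ix a) (hc1 (ix a) hPa)
    have e : (⟨((ix a : ℕ) + 1) % t, Nat.mod_lt _ (ix a).pos⟩ : Fin t) = ix (a + 1) := by
      ext; simp [ix, Nat.mod_add_mod]
    rwa [e] at h2
  have hmono : ∀ (a n : ℕ), px (ix a) → px (ix (a + n)) := by
    intro a n h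
    induction n with
    | zero => simpa using h
    | succ n ih => exact (by rw [← Nat.add_assoc]; exact hstep (a + n) ih)
  have hallofex : (∃ i : Fin t, px i) → ∀ i : Fin t, px i := by
    rintro ⟨j, hj⟩ i
    have hjix : ix (j : ℕ) = j := by ext; simp [ix, Nat.mod_eq_of_lt j.isLt]
    have hbase : px (ix (j : ℕ)) := by rwa [hjix]
    have h := hmono (j : ℕ) ((i : ℕ) + t - (j : ℕ)) hbase
    have e : ix ((j : ℕ) + ((i : ℕ) + t - (j : ℕ))) = i := by
      have hsum : (j : ℕ) + ((i : ℕ) + t - (j : ℕ)) = (i : ℕ) + t := by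
        have := j.isLt; omega
      ext
      simp [ix, hsum, Nat.add_mod_right, Nat.mod_eq_of_lt i.isLt]
    rwa [e] at h
  by_cases hex : ∃ i : Fin t, px i
  · -- the whole wheel lies in the f-block
    have hall : ∀ i : Fin t, px i := hallofex hex
    have hally : ∀ i : Fin t, py i := fun i => hc1 i (hall i)
    apply mul_eq_zero_of_left
    apply mul_eq_zero_of_left
    apply mul_eq_zero_of_left
    refine wheel_eval_zero v t f hf hfw _
      (fun i => ⟨((σ⁻¹ (Fin.castLE hn i) : Fin (k₁+k₂)) : ℕ), hall i⟩)
      (fun i => ⟨((τ⁻¹ (Fin.castLE hm i) : Fin (l₁+l₂)) : ℕ), hally i⟩)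
      ?_ ?_ ?_ ?_ ?_ ?_
    · intro i j hij
      simp only [Fin.mk.injEq] at hij
      exact Fin.castLE_injective hn ((σ⁻¹).injective (Fin.ext hij))
    · intro i j hij
      simp only [Fin.mk.injEq] at hij
      exact Fin.castLE_injective hm ((τ⁻¹).injective (Fin.ext hij))
    · intro i
      simpa [fin_castAdd_mk _ (hall i), Perm.apply_inv_self] using hz0 i
    · intro i
      simpa [fin_castAdd_mk _ (hall i), fin_castAdd_mk _ (hally i),
        Perm.apply_inv_self] using hzy i
    · intro i
      simpa [fin_castAdd_mk _ (hall _), fin_castAdd_mk _ (hally i),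
        Perm.apply_inv_self] using hzx i
    · intro a b
      exact hDp _ _
  · -- the whole wheel lies in the g-block
    have hnox : ∀ i : Fin t, ¬ px i := fun i h => hex ⟨i, h⟩
    have hnoy : ∀ i : Fin t, ¬ py i := fun i h => hex ⟨_, hc2 i h⟩
    apply mul_eq_zero_of_left
    apply mul_eq_zero_of_left
    apply mul_eq_zero_of_right
    refine wheel_eval_zero v t g hg hgw _
      (fun i => ⟨((σ⁻¹ (Fin.castLE hn i) : Fin (k₁+k₂)) : ℕ) - k₁, by
        have := (σ⁻¹ (Fin.castLE hn i) : Fin (k₁+k₂)).isLt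
        have := hnox i; simp only [hpxdef] at this; omega⟩)
      (fun i => ⟨((τ⁻¹ (Fin.castLE hm i) : Fin (l₁+l₂)) : ℕ) - l₁, by
        have := (τ⁻¹ (Fin.castLE hm i) : Fin (l₁+l₂)).isLt
        have := hnoy i; simp only [hpydef] at this; omega⟩)
      ?_ ?_ ?_ ?_ ?_ ?_
    · intro i j hij
      simp only [Fin.mk.injEq] at hij
      refine Fin.castLE_injective hn ((σ⁻¹).injective (Fin.ext ?_))
      have hi := le_of_not_gt (hnox i)
      have hj := le_of_not_gt (hnox j)
      omega
    · intro i j hij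
      simp only [Fin.mk.injEq] at hij
      refine Fin.castLE_injective hm ((τ⁻¹).injective (Fin.ext ?_))
      have hi := le_of_not_gt (hnoy i)
      have hj := le_of_not_gt (hnoy j)
      omega
    · intro i
      simp only [Function.comp_apply, Sum.map_inl]
      rw [fin_natAdd_mk _ (le_of_not_gt (hnox i)), Perm.apply_inv_self]
      exact hz0 i
    · intro i
      simp only [Function.comp_apply, Sum.map_inl, Sum.map_inr]
      rw [fin_natAdd_mk _ (le_of_not_gt (hnox i)), Perm.apply_inv_self,
        fin_natAdd_mk _ (le_of_not_gt (hnoy i)), Perm.apply_inv_self]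
      exact hzy i
    · intro i
      simp only [Function.comp_apply, Sum.map_inl, Sum.map_inr]
      rw [fin_natAdd_mk _ (le_of_not_gt (hnox ⟨((i:ℕ)+1)%t, Nat.mod_lt _ i.pos⟩)),
        Perm.apply_inv_self,
        fin_natAdd_mk _ (le_of_not_gt (hnoy i)), Perm.apply_inv_self]
      exact hzx i
    · intro a b
      exact hDp _ _
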